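/- Let ρ₁ ≥ ρ₂ ≥ ρ₃ ≥ ω and ρ₃ ≥ ρ₄ ≥ 2 be cardinals. Then cov(ρ₁⁺, ρ₂, ρ₃, ρ₄) = max{ρ₁⁺, cov(ρ₁, ρ₂, ρ₃, ρ₄)}. -/

import Mathlib

open Cardinal

noncomputable section

/-- The covering number `cov(ρ₁, ρ₂, ρ₃, ρ₄)`: least cardinality of `X ⊆ P_{ρ₂}(ρ₁)`
such that every `b ∈ P_{ρ₃}(ρ₁)` is covered by the union of fewer than `ρ₄` members of `X`. -/
def cov (r1 r2 r3 r4 : Cardinal) : Cardinal :=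
  sInf { c | ∃ X : Set (Set r1.out),
    (∀ x ∈ X, #x < r2) ∧
    (∀ b : Set r1.out, #b < r3 → ∃ Q : Set (Set r1.out), Q ⊆ X ∧ #Q < r4 ∧ b ⊆ ⋃₀ Q) ∧
    #X = c }

/-- The meeting number `m(ρ, λ)`. -/
def meet (ρ lam : Cardinal) : Cardinal :=
  sInf { c | ∃ Q : Set (Set lam.out),
    (∀ q ∈ Q, #q = ρ) ∧
    (∀ b : Set lam.out, #b = ρ → ∃ q ∈ Q, #(↥(b ∩ q)) = ρ) ∧
    #Q = c }

/-- The density number `d(ρ, λ)`. -/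
def dens (ρ lam : Cardinal) : Cardinal :=
  sInf { c | ∃ Q : Set (Set lam.out),
    (∀ q ∈ Q, #q = ρ) ∧
    (∀ b : Set lam.out, #b = ρ → ∃ q ∈ Q, q ⊆ b) ∧
    #Q = c }

/-- `ds(f)` for `f : λ → ρ`. -/
def ds (ρ lam : Cardinal) (f : lam.out → ρ.out) : Cardinal :=
  sInf { c | ∃ Z : Set (Set lam.out),
    (∀ z ∈ Z, #z = ρ) ∧
    (∀ B : Set lam.out, (∀ α : ρ.out, #(↥(B ∩ f ⁻¹' {α})) = lam) →
      ∃ z ∈ Z, #(↥(f '' (z ∩ B))) = ρ) ∧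
    #Z = c }

/-- The Džamonja–Shelah number `DS(ρ, λ) = sup { ds(f) : f : λ → ρ }`. -/
def DS (ρ lam : Cardinal) : Cardinal := ⨆ f : lam.out → ρ.out, ds ρ lam f

/-- Cofinality of a cardinal. -/
def cf (c : Cardinal) : Cardinal := c.ord.cof

/-- `u(σ, λ) = cov(λ, σ, σ, ω)`. -/
def u (σ lam : Cardinal) : Cardinal := cov lam σ σ ℵ₀

/-- The `o`-th iterated cardinal successor of `c`. -/
def succIter (c : Cardinal) (o : Ordinal) : Cardinal :=
  Cardinal.preAleph (Cardinal.preAleph.symm c + o)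


section CovAux
open Set

universe u

def covSet (r1 r2 r3 r4 : Cardinal.{u}) : Set Cardinal.{u} :=
  { c | ∃ X : Set (Set r1.out),
    (∀ x ∈ X, #x < r2) ∧
    (∀ b : Set r1.out, #b < r3 → ∃ Q : Set (Set r1.out), Q ⊆ X ∧ #Q < r4 ∧ b ⊆ ⋃₀ Q) ∧
    #X = c }

lemma covSet_nonempty (r1 r2 r3 r4 : Cardinal.{u}) (h23 : r3 ≤ r2) (h4 : 2 ≤ r4) :
    (covSet r1 r2 r3 r4).Nonempty := by
  refine ⟨_, {b | #b < r2}, fun x hx => hx, fun b hb => ⟨{b}, ?_, ?_, ?_⟩, rfl⟩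
  · intro q hq; rw [mem_singleton_iff] at hq; subst hq; exact hb.trans_le h23
  · rw [mk_singleton]; exact lt_of_lt_of_le one_lt_two h4
  · intro t ht; exact ⟨b, rfl, ht⟩

lemma bounded_of_mk_lt_cof {α : Type u} [LinearOrder α] [WellFoundedLT α] {s : Set α}
    (h : #s < (Ordinal.type ((· < ·) : α → α → Prop)).cof) : ∃ y, ∀ x ∈ s, x < y :=
  by
  rw [Ordinal.cof_type] at h
  by_contra hc
  push_neg at hc
  exact (Order.cof_le (s := s) fun a => by
    obtain ⟨x, hx, hxa⟩ := hc a
    exact ⟨x, hx, hxa⟩).not_gt h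

/-- Upper bound: cov(succ r1) ≤ max. -/
lemma cov_succ_le (r1 r2 r3 r4 : Cardinal.{u}) (h12 : r2 ≤ r1) (h23 : r3 ≤ r2)
    (h3 : ℵ₀ ≤ r3) (h4 : 2 ≤ r4) :
    sInf (covSet (Order.succ r1) r2 r3 r4) ≤
      max (Order.succ r1) (sInf (covSet r1 r2 r3 r4)) := by
  have h1 : ℵ₀ ≤ r1 := h3.trans (h23.trans h12)
  set M := max (Order.succ r1) (sInf (covSet r1 r2 r3 r4)) with hM
  -- minimal witness for r1
  obtain ⟨X₁, hX₁a, hX₁b, hX₁c⟩ := csInf_mem (covSet_nonempty r1 r2 r3 r4 h23 h4)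
  set T := (Order.succ r1).out with hT
  have hcardT : #T = Order.succ r1 := mk_out _
  have hcardo : #(Order.succ r1).ord.ToType = Order.succ r1 := by
    rw [Cardinal.mk_toType, card_ord]
  obtain ⟨e⟩ : Nonempty (T ≃ (Order.succ r1).ord.ToType) := by
    rw [← Cardinal.eq, hcardT, hcardo]
  set A : (Order.succ r1).ord.ToType → Set T := fun y => {t | e t < y} with hA
  have hAcard : ∀ y, #(A y) ≤ r1 := by
    intro y
    have h1' : #(↥(Set.Iio y)) < Order.succ r1 := Cardinal.mk_Iio_ord_toType y
    have h3' : #(A y) ≤ #(↥(Set.Iio y)) :=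
      mk_preimage_of_injective e (Set.Iio y) e.injective
    exact Order.lt_succ_iff.mp (h3'.trans_lt h1')
  have hef : ∀ y, ∃ f : ↥(A y) → r1.out, Function.Injective f := by
    intro y
    have : #(↥(A y)) ≤ #r1.out := by rw [mk_out]; exact hAcard y
    obtain ⟨f⟩ := (Cardinal.le_def _ _).1 this
    exact ⟨f, f.injective⟩
  choose f hf using hef
  set img : (Order.succ r1).ord.ToType → Set r1.out → Set T :=
    fun y x => {t | ∃ h : t ∈ A y, f y ⟨t, h⟩ ∈ x} with himg
  have himgcard : ∀ y x, #(img y x) ≤ #x := by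
    intro y x
    refine mk_le_of_injective (f := fun t : ↥(img y x) =>
      (⟨f y ⟨t.1, t.2.choose⟩, t.2.choose_spec⟩ : ↥x)) ?_
    rintro ⟨t, ht⟩ ⟨t', ht'⟩ hh
    simp only [Subtype.mk_eq_mk] at hh ⊢
    have := hf y hh
    exact congrArg Subtype.val this
  set Xbig : Set (Set T) := ⋃ y, (img y) '' X₁ with hXbig
  -- Xbig is a witness
  have hmem : #Xbig ∈ covSet (Order.succ r1) r2 r3 r4 := by
    refine ⟨Xbig, ?_, ?_, rfl⟩
    · rintro x ⟨_, ⟨y, rfl⟩, x₁, hx₁, rfl⟩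
      exact (himgcard y x₁).trans_lt (hX₁a x₁ hx₁)
    · intro b hb
      -- find y bounding b
      obtain ⟨y, hy⟩ : ∃ y, ∀ x ∈ e '' b, x < y := by
        apply bounded_of_mk_lt_cof
        rw [Ordinal.type_toType, (Cardinal.isRegular_succ h1).cof_eq]
        calc #(e '' b) = #b := mk_image_eq e.injective
          _ < r3 := hb
          _ ≤ Order.succ r1 := (h23.trans h12).trans (Order.le_succ r1)
      have hbA : ∀ t ∈ b, t ∈ A y := fun t ht => hy (e t) ⟨t, ht, rfl⟩
      set s : Set r1.out := (f y) '' (Subtype.val ⁻¹' b) with hs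
      have hscard : #s < r3 := by
        calc #s ≤ #(Subtype.val ⁻¹' b : Set ↥(A y)) := mk_image_le
          _ ≤ #b := mk_preimage_of_injective _ _ Subtype.val_injective
          _ < r3 := hb
      obtain ⟨Q, hQ1, hQ2, hQ3⟩ := hX₁b s hscard
      refine ⟨(img y) '' Q, ?_, mk_image_le.trans_lt hQ2, ?_⟩
      · intro q hq
        exact Set.mem_iUnion.2 ⟨y, Set.image_mono hQ1 hq⟩
      · intro t ht
        have htA : t ∈ A y := hbA t ht
        have : f y ⟨t, htA⟩ ∈ s := ⟨⟨t, htA⟩, ht, rfl⟩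
        obtain ⟨q, hq, hfq⟩ := hQ3 this
        exact ⟨img y q, Set.mem_image_of_mem _ hq, htA, hfq⟩
  have hcardXbig : #Xbig ≤ M := by
    have h1' : #Xbig ≤ #(Order.succ r1).ord.ToType * ⨆ y, #((img y) '' X₁) := mk_iUnion_le _
    have h2' : (⨆ y, #((img y) '' X₁)) ≤ sInf (covSet r1 r2 r3 r4) :=
      ciSup_le' fun y => mk_image_le.trans_eq hX₁c
    have hM0 : ℵ₀ ≤ M := (h3.trans ((h23.trans h12).trans (Order.le_succ r1))).trans (le_max_left _ _)
    calc #Xbig ≤ #(Order.succ r1).ord.ToType * ⨆ y, #((img y) '' X₁) := h1'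
      _ ≤ M * M := by
          refine mul_le_mul' ?_ (h2'.trans (le_max_right _ _))
          rw [hcardo]; exact le_max_left _ _
      _ = M := mul_eq_self hM0
  exact (csInf_le' hmem).trans hcardXbig

theorem stmt10' (r1 r2 r3 r4 : Cardinal) (h12 : r2 ≤ r1) (h23 : r3 ≤ r2)
    (h3 : ℵ₀ ≤ r3) (h34 : r4 ≤ r3) (h4 : 2 ≤ r4) :
    sInf (covSet (Order.succ r1) r2 r3 r4) = max (Order.succ r1) (sInf (covSet r1 r2 r3 r4)) := by
  have h1 : ℵ₀ ≤ r1 := h3.trans (h23.trans h12)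
  refine le_antisymm (cov_succ_le r1 r2 r3 r4 h12 h23 h3 h4) ?_
  obtain ⟨X, hXa, hXb, hXc⟩ := csInf_mem (covSet_nonempty (Order.succ r1) r2 r3 r4 h23 h4)
  rw [← hXc]
  refine max_le ?_ ?_
  · -- succ r1 ≤ #X
    have huniv : (Set.univ : Set (Order.succ r1).out) ⊆ ⋃₀ X := by
      intro t _
      obtain ⟨Q, hQX, -, hQc⟩ := hXb {t}
        (by rw [mk_singleton]; exact one_lt_aleph0.trans_le h3)
      exact Set.sUnion_mono hQX (hQc rfl)
    have h2' : Order.succ r1 ≤ #X * r1 := by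
      have he : #(⋃₀ X) = Order.succ r1 := by
        rw [Set.univ_subset_iff.mp huniv, mk_univ, mk_out]
      have hsU := mk_sUnion_le X
      have hsup : (⨆ s : X, #s) ≤ r1 := ciSup_le' fun s => ((hXa s.1 s.2).trans_le h12).le
      rw [he] at hsU
      exact hsU.trans (mul_le_mul_right hsup _)
    by_contra hlt
    push_neg at hlt
    have hle : #X ≤ r1 := Order.lt_succ_iff.mp hlt
    have : #X * r1 ≤ r1 := by
      calc #X * r1 ≤ r1 * r1 := mul_le_mul_left hle r1
        _ = r1 := mul_eq_self h1
    exact absurd (h2'.trans this) (Order.lt_succ r1).not_ge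
  · -- cov r1 ≤ #X
    obtain ⟨j⟩ : Nonempty (r1.out ↪ (Order.succ r1).out) :=
      (Cardinal.le_def _ _).1 (by rw [mk_out, mk_out]; exact Order.le_succ r1)
    have hmem : #((fun x => ⇑j ⁻¹' x) '' X) ∈ covSet r1 r2 r3 r4 := by
      refine ⟨_, ?_, ?_, rfl⟩
      · rintro _ ⟨x, hx, rfl⟩
        exact (mk_preimage_of_injective _ _ j.injective).trans_lt (hXa x hx)
      · intro b hb
        have hib : #(⇑j '' b) < r3 := by rw [mk_image_eq j.injective]; exact hb
        obtain ⟨Q, hQX, hQc, hQcov⟩ := hXb _ hib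
        refine ⟨(fun x => ⇑j ⁻¹' x) '' Q, Set.image_mono hQX,
          mk_image_le.trans_lt hQc, ?_⟩
        intro t ht
        obtain ⟨q, hq, hjq⟩ := hQcov (Set.mem_image_of_mem _ ht)
        exact ⟨_, Set.mem_image_of_mem _ hq, hjq⟩
    exact le_trans (csInf_le' hmem) mk_image_le

end CovAux

theorem stmt10 (r1 r2 r3 r4 : Cardinal) (h12 : r2 ≤ r1) (h23 : r3 ≤ r2)
    (h3 : ℵ₀ ≤ r3) (h34 : r4 ≤ r3) (h4 : 2 ≤ r4) :
    cov (Order.succ r1) r2 r3 r4 = max (Order.succ r1) (cov r1 r2 r3 r4) :=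
  stmt10' r1 r2 r3 r4 h12 h23 h3 h34 h4
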